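/- Lipschitz estimate for the whole-line solution operator: Under the hypotheses — (T(t))_{t≥0} an exponentially stable C₀-semigroup on Y with constants M ≥ 1, α > 0; F : ℝ × Y × Y → Y continuous with ‖F(s,x₁,y₁) − F(s,x₂,y₂)‖ ≤ L_F(s)·(‖x₁−x₂‖ + ‖y₁−y₂‖) for a bounded L_F : ℝ → [0,∞) with L_F* = sup L_F; H : ℝ × ℝ × Y → Y continuous with ‖H(t,s,y₁) − H(t,s,y₂)‖ ≤ L_H(s)·‖y₁−y₂‖ for a continuous L_H : ℝ → [0,∞) with L_H¹* := sup_{t∈ℝ} ∫_{−∞}^t L_H(τ) dτ < ∞; and for every bounded continuous u : ℝ → Y and t ∈ ℝ the map τ ↦ H(t,τ,u(τ)) is Bochner integrable on (−∞,t] — define, for bounded continuous u : ℝ → Y, Υ(u)(s) = ∫_{−∞}^s T(s−t)·F( t, u(t), ∫_{−∞}^t H(t,τ,u(τ)) dτ ) dt. Then for all bounded continuous y₁, y₂ : ℝ → Y and all s ∈ ℝ, ‖Υ(y₂)(s) − Υ(y₁)(s)‖ ≤ (M/α)·L_F*·(1 + L_H¹*)·sup_{t∈ℝ} ‖y₂(t)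 − y₁(t)‖. -/

import Mathlib

open Filter Topology MeasureTheory

private lemma exp_int_aux {α : ℝ} (hα : 0 < α) (s : ℝ) :
    IntegrableOn (fun t => Real.exp (-α * (s - t))) (Set.Iic s) := by
  have h1 : IntegrableOn (fun x : ℝ => Real.exp (-α * (s + x))) (Set.Ioi (-s)) := by
    have h := (exp_neg_integrableOn_Ioi (-s) hα).const_mul (Real.exp (-α * s))
    refine IntegrableOn.congr_fun h (fun x _ => ?_) measurableSet_Ioi
    rw [← Real.exp_add]; ring_nf
  have h2 : IntegrableOn ((fun x : ℝ => Real.exp (-α * (s + x))) ∘ Neg.neg)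
      (Neg.neg ⁻¹' (Set.Ioi (-s))) :=
    ((Measure.measurePreserving_neg (volume : Measure ℝ)).integrableOn_comp_preimage
      (Homeomorph.neg ℝ).measurableEmbedding).mpr h1
  have hpre : (Neg.neg ⁻¹' (Set.Ioi (-s)) : Set ℝ) = Set.Iio s := by ext x; simp
  rw [hpre] at h2
  rw [integrableOn_Iic_iff_integrableOn_Iio]
  refine IntegrableOn.congr_fun h2 (fun x _ => ?_) measurableSet_Iio
  simp only [Function.comp]; ring_nf

private lemma exp_val_aux {α : ℝ} (hα : 0 < α) (s : ℝ) :
    ∫ t in Set.Iic s, Real.exp (-α * (s - t)) = α⁻¹ := by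
  have h0 : (∫ t in Set.Iic s, Real.exp (-α * (s - t)))
      = ∫ x in Set.Ioi (-s), Real.exp (-α * (s + x)) := by
    rw [← integral_comp_neg_Iic s (fun x => Real.exp (-α * (s + x)))]
    refine setIntegral_congr_fun measurableSet_Iic (fun t _ => ?_)
    ring_nf
  rw [h0]
  have h1 : (∫ x in Set.Ioi (-s), Real.exp (-α * (s + x)))
      = Real.exp (-α * s) * ∫ x in Set.Ioi (-s), Real.exp (-(α * x)) := by
    rw [← integral_const_mul]
    refine setIntegral_congr_fun measurableSet_Ioi (fun x _ => ?_)
    rw [← Real.exp_add]; ring_nf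
  rw [h1, integral_comp_mul_left_Ioi (fun u => Real.exp (-u)) (-s) hα,
    integral_exp_neg_Ioi, smul_eq_mul]
  calc Real.exp (-α * s) * (α⁻¹ * Real.exp (-(α * -s)))
      = α⁻¹ * (Real.exp (-α * s) * Real.exp (-(α * -s))) := by ring
    _ = α⁻¹ := by
        rw [← Real.exp_add, show -α * s + -(α * -s) = 0 by ring, Real.exp_zero, mul_one]

private lemma T_joint_cont {Y : Type*} [NormedAddCommGroup Y] [NormedSpace ℝ Y]
    (T : ℝ → Y →L[ℝ] Y) (M α : ℝ) (hα : 0 < α)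
    (hTcont : ∀ x : Y, ContinuousOn (fun t => T t x) (Set.Ici (0 : ℝ)))
    (hTbound : ∀ t ≥ (0 : ℝ), ‖T t‖ ≤ M * Real.exp (-α * t)) :
    Continuous (fun p : ℝ × Y => T (max p.1 0) p.2) := by
  have hM : ∀ t : ℝ, ‖T (max t 0)‖ ≤ M := by
    intro t
    refine (hTbound _ (le_max_right _ _)).trans ?_
    have h1 : Real.exp (-α * max t 0) ≤ 1 := by
      rw [Real.exp_le_one_iff]
      exact mul_nonpos_of_nonpos_of_nonneg (neg_nonpos.mpr hα.le) (le_max_right _ _)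
    have hM0 : 0 ≤ M := le_trans (norm_nonneg _) ((hTbound 0 le_rfl).trans (by simp))
    calc M * Real.exp (-α * max t 0) ≤ M * 1 := by nlinarith
      _ = M := mul_one M
  rw [continuous_iff_continuousAt]
  rintro ⟨t₀, x₀⟩
  have hx₀ : Continuous fun t : ℝ => T (max t 0) x₀ :=
    (hTcont x₀).comp_continuous (continuous_id.max continuous_const)
      (fun t => Set.mem_Ici.mpr (le_max_right _ _))
  have key : Tendsto (fun p : ℝ × Y => T (max p.1 0) (p.2 - x₀)) (𝓝 (t₀, x₀)) (𝓝 0) := by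
    have hb : ∀ p : ℝ × Y, ‖T (max p.1 0) (p.2 - x₀)‖ ≤ M * ‖p.2 - x₀‖ := fun p =>
      le_trans ((T _).le_opNorm _) (by
        have := hM p.1
        have := norm_nonneg (p.2 - x₀)
        nlinarith)
    have h2 : Tendsto (fun p : ℝ × Y => M * ‖p.2 - x₀‖) (𝓝 (t₀, x₀)) (𝓝 (M * ‖x₀ - x₀‖)) :=
      tendsto_const_nhds.mul ((continuous_snd.sub continuous_const).norm.tendsto _)
    rw [sub_self, norm_zero, mul_zero] at h2
    exact squeeze_zero_norm hb h2
  have h3 : Tendsto (fun p : ℝ × Y => T (max p.1 0) (p.2 - x₀) + T (max p.1 0) x₀)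
      (𝓝 (t₀, x₀)) (𝓝 (0 + T (max t₀ 0) x₀)) :=
    key.add ((hx₀.tendsto t₀).comp (continuous_fst.tendsto _))
  rw [zero_add] at h3
  unfold ContinuousAt
  convert h3 using 2 with p
  rw [← map_add, sub_add_cancel]

private lemma v_meas {Y : Type*} [NormedAddCommGroup Y] [NormedSpace ℝ Y] [CompleteSpace Y]
    (H : ℝ → ℝ → Y → Y)
    (hHcont : Continuous fun p : ℝ × ℝ × Y => H p.1 p.2.1 p.2.2)
    (u : ℝ → Y) (hu : Continuous u) :
    StronglyMeasurable (fun t => ∫ τ in Set.Iic t, H t τ (u τ)) := by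
  set w : ℝ × ℝ → Y := fun p => Set.indicator {q : ℝ × ℝ | q.2 ≤ q.1}
    (fun q => H q.1 q.2 (u q.2)) p with hw
  have hwm : StronglyMeasurable w := by
    refine StronglyMeasurable.indicator ?_ ?_
    · exact (hHcont.comp (continuous_fst.prodMk
        (continuous_snd.prodMk (hu.comp continuous_snd)))).stronglyMeasurable
    · exact measurableSet_le measurable_snd measurable_fst
  have heq : (fun t => ∫ τ in Set.Iic t, H t τ (u τ)) = fun t => ∫ τ, w (t, τ) := by
    funext t
    rw [← integral_indicator measurableSet_Iic]
    refine integral_congr_ae (Filter.Eventually.of_forall fun τ => ?_)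
    by_cases h : τ ≤ t
    · simp [w, Set.indicator, h]
    · simp [w, Set.indicator, h]
  rw [heq]
  exact hwm.integral_prod_right'

/-- Lipschitz estimate for the whole-line solution operator
`Υ u s = ∫_{-∞}^s T (s - t) F (t, u t, ∫_{-∞}^t H (t, τ, u τ) dτ) dt`:
for bounded continuous `y₁, y₂` and all `s`,
`‖Υ y₂ s - Υ y₁ s‖ ≤ (M / α) L_F* (1 + L_H¹*) · sup_t ‖y₂ t - y₁ t‖`. -/
theorem whole_line_solution_operator_lipschitz
    {Y : Type*} [NormedAddCommGroup Y] [NormedSpace ℝ Y] [CompleteSpace Y]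
    (T : ℝ → Y →L[ℝ] Y) (M α : ℝ) (hM : 1 ≤ M) (hα : 0 < α)
    (hT0 : T 0 = ContinuousLinearMap.id ℝ Y)
    (hTadd : ∀ t ≥ (0 : ℝ), ∀ s ≥ (0 : ℝ), T (t + s) = (T t).comp (T s))
    (hTcont : ∀ x : Y, ContinuousOn (fun t => T t x) (Set.Ici (0 : ℝ)))
    (hTbound : ∀ t ≥ (0 : ℝ), ‖T t‖ ≤ M * Real.exp (-α * t))
    (F : ℝ → Y → Y → Y)
    (hFcont : Continuous fun p : ℝ × Y × Y => F p.1 p.2.1 p.2.2)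
    (LF : ℝ → ℝ) (LFs : ℝ) (hLF0 : ∀ s, 0 ≤ LF s) (hLFs : ∀ s, LF s ≤ LFs)
    (hFlip : ∀ (s : ℝ) (x₁ x₂ y₁ y₂ : Y),
      ‖F s x₁ y₁ - F s x₂ y₂‖ ≤ LF s * (‖x₁ - x₂‖ + ‖y₁ - y₂‖))
    (H : ℝ → ℝ → Y → Y)
    (hHcont : Continuous fun p : ℝ × ℝ × Y => H p.1 p.2.1 p.2.2)
    (LH : ℝ → ℝ) (hLHcont : Continuous LH) (hLH0 : ∀ s, 0 ≤ LH s)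
    (hHlip : ∀ (t s : ℝ) (y₁ y₂ : Y), ‖H t s y₁ - H t s y₂‖ ≤ LH s * ‖y₁ - y₂‖)
    (LH1s : ℝ)
    (hLHint : ∀ t : ℝ, IntegrableOn LH (Set.Iic t))
    (hLH1s : ∀ t : ℝ, (∫ τ in Set.Iic t, LH τ) ≤ LH1s)
    (hHint : ∀ u : ℝ → Y, Continuous u → (∃ C, ∀ t : ℝ, ‖u t‖ ≤ C) →
      ∀ t : ℝ, IntegrableOn (fun τ => H t τ (u τ)) (Set.Iic t))
    (Υ : (ℝ → Y) → ℝ → Y)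
    (hΥ : ∀ (u : ℝ → Y) (s : ℝ),
      Υ u s = ∫ t in Set.Iic s, T (s - t) (F t (u t) (∫ τ in Set.Iic t, H t τ (u τ))))
    (y₁ y₂ : ℝ → Y)
    (hy₁cont : Continuous y₁) (hy₁bdd : ∃ C, ∀ t : ℝ, ‖y₁ t‖ ≤ C)
    (hy₂cont : Continuous y₂) (hy₂bdd : ∃ C, ∀ t : ℝ, ‖y₂ t‖ ≤ C) :
    ∀ s : ℝ, ‖Υ y₂ s - Υ y₁ s‖ ≤
      (M / α) * LFs * (1 + LH1s) * ⨆ t : ℝ, ‖y₂ t - y₁ t‖ := by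
  obtain ⟨C₁, hC₁⟩ := hy₁bdd
  obtain ⟨C₂, hC₂⟩ := hy₂bdd
  have hM0 : 0 ≤ M := zero_le_one.trans hM
  set D := ⨆ t : ℝ, ‖y₂ t - y₁ t‖ with hDdef
  have hDub : ∀ t, ‖y₂ t - y₁ t‖ ≤ D := fun t =>
    le_ciSup ⟨C₂ + C₁, by
      rintro x ⟨t', rfl⟩
      exact (norm_sub_le _ _).trans (add_le_add (hC₂ t') (hC₁ t'))⟩ t
  have hD0 : 0 ≤ D := le_trans (norm_nonneg _) (hDub 0)
  have hLFs0 : 0 ≤ LFs := (hLF0 0).trans (hLFs 0)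
  have hLH1s0 : 0 ≤ LH1s :=
    le_trans (setIntegral_nonneg measurableSet_Iic fun τ _ => hLH0 τ) (hLH1s 0)
  intro s
  set v₁ : ℝ → Y := fun t => ∫ τ in Set.Iic t, H t τ (y₁ τ) with hv₁def
  set v₂ : ℝ → Y := fun t => ∫ τ in Set.Iic t, H t τ (y₂ τ) with hv₂def
  have hv : ∀ t, ‖v₂ t - v₁ t‖ ≤ LH1s * D := by
    intro t
    have hi₂ := hHint y₂ hy₂cont ⟨C₂, hC₂⟩ t
    have hi₁ := hHint y₁ hy₁cont ⟨C₁, hC₁⟩ t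
    have hsub : v₂ t - v₁ t = ∫ τ in Set.Iic t, (H t τ (y₂ τ) - H t τ (y₁ τ)) :=
      (integral_sub hi₂ hi₁).symm
    rw [hsub]
    have hbint : Integrable (fun τ => LH τ * D) (volume.restrict (Set.Iic t)) :=
      (hLHint t).mul_const D
    have hb : ∀ᵐ τ ∂(volume.restrict (Set.Iic t)),
        ‖H t τ (y₂ τ) - H t τ (y₁ τ)‖ ≤ LH τ * D :=
      Filter.Eventually.of_forall fun τ =>
        (hHlip t τ _ _).trans (mul_le_mul_of_nonneg_left (hDub τ) (hLH0 τ))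
    refine (norm_integral_le_of_norm_le hbint hb).trans ?_
    rw [integral_mul_const]
    exact mul_le_mul_of_nonneg_right (hLH1s t) hD0
  set g₁ : ℝ → Y := fun t => F t (y₁ t) (v₁ t) with hg₁def
  set g₂ : ℝ → Y := fun t => F t (y₂ t) (v₂ t) with hg₂def
  set Cst := LFs * ((1 + LH1s) * D) with hCstdef
  have hCst0 : 0 ≤ Cst := by
    rw [hCstdef]; positivity
  have hg : ∀ t, ‖g₂ t - g₁ t‖ ≤ Cst := by
    intro t
    refine (hFlip t _ _ _ _).trans ?_
    have h1 : ‖y₂ t - y₁ t‖ + ‖v₂ t - v₁ t‖ ≤ D + LH1s * D := add_le_add (hDub t) (hv t)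
    calc LF t * (‖y₂ t - y₁ t‖ + ‖v₂ t - v₁ t‖) ≤ LFs * (D + LH1s * D) :=
          mul_le_mul (hLFs t) h1 (by positivity) hLFs0
      _ = Cst := by rw [hCstdef]; ring
  have hv₁m : StronglyMeasurable v₁ := v_meas H hHcont y₁ hy₁cont
  have hv₂m : StronglyMeasurable v₂ := v_meas H hHcont y₂ hy₂cont
  have hg₁m : StronglyMeasurable g₁ :=
    hFcont.comp_stronglyMeasurable
      (stronglyMeasurable_id.prodMk (hy₁cont.stronglyMeasurable.prodMk hv₁m))
  have hg₂m : StronglyMeasurable g₂ :=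
    hFcont.comp_stronglyMeasurable
      (stronglyMeasurable_id.prodMk (hy₂cont.stronglyMeasurable.prodMk hv₂m))
  set f₁ : ℝ → Y := fun t => T (s - t) (g₁ t) with hf₁def
  set f₂ : ℝ → Y := fun t => T (s - t) (g₂ t) with hf₂def
  have hΦ := T_joint_cont T M α hα hTcont hTbound
  have hfm : ∀ (g : ℝ → Y), StronglyMeasurable g →
      AEStronglyMeasurable (fun t => T (s - t) (g t)) (volume.restrict (Set.Iic s)) := by
    intro g hgm
    have h1 : StronglyMeasurable (fun t => T (max (s - t) 0) (g t)) :=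
      hΦ.comp_stronglyMeasurable
        (((continuous_const.sub continuous_id).stronglyMeasurable).prodMk hgm)
    refine h1.aestronglyMeasurable.congr ?_
    filter_upwards [ae_restrict_mem measurableSet_Iic] with t ht
    rw [max_eq_left (sub_nonneg.2 ht)]
  have hf₁m : AEStronglyMeasurable f₁ (volume.restrict (Set.Iic s)) := hfm g₁ hg₁m
  have hf₂m : AEStronglyMeasurable f₂ (volume.restrict (Set.Iic s)) := hfm g₂ hg₂m
  have hexpint := exp_int_aux hα s
  have hptw : ∀ t ∈ Set.Iic s, ‖f₂ t - f₁ t‖ ≤ (M * Cst) * Real.exp (-α * (s - t)) := by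
    intro t ht
    have h1 : f₂ t - f₁ t = T (s - t) (g₂ t - g₁ t) := (map_sub (T (s - t)) _ _).symm
    rw [h1]
    calc ‖T (s - t) (g₂ t - g₁ t)‖ ≤ ‖T (s - t)‖ * ‖g₂ t - g₁ t‖ := (T _).le_opNorm _
      _ ≤ (M * Real.exp (-α * (s - t))) * Cst :=
          mul_le_mul (hTbound _ (sub_nonneg.2 ht)) (hg t) (norm_nonneg _)
            (mul_nonneg hM0 (Real.exp_pos _).le)
      _ = (M * Cst) * Real.exp (-α * (s - t)) := by ring
  have hbnd_int : IntegrableOn (fun t => (M * Cst) * Real.exp (-α * (s - t))) (Set.Iic s) :=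
    hexpint.const_mul _
  have hdiffint : IntegrableOn (fun t => f₂ t - f₁ t) (Set.Iic s) := by
    refine Integrable.mono' hbnd_int (hf₂m.sub hf₁m) ?_
    filter_upwards [ae_restrict_mem measurableSet_Iic] with t ht
    exact hptw t ht
  have e₂ : Υ y₂ s = ∫ t in Set.Iic s, f₂ t := hΥ y₂ s
  have e₁ : Υ y₁ s = ∫ t in Set.Iic s, f₁ t := hΥ y₁ s
  rw [e₂, e₁]
  by_cases h₁ : IntegrableOn f₁ (Set.Iic s)
  · have h₂ : IntegrableOn f₂ (Set.Iic s) :=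
      (h₁.add hdiffint).congr (Filter.Eventually.of_forall fun t => by
        show f₁ t + (f₂ t - f₁ t) = f₂ t; abel)
    rw [show (∫ t in Set.Iic s, f₂ t) - (∫ t in Set.Iic s, f₁ t)
        = ∫ t in Set.Iic s, (f₂ t - f₁ t) from (integral_sub h₂ h₁).symm]
    refine (norm_integral_le_of_norm_le hbnd_int ?_).trans ?_
    · filter_upwards [ae_restrict_mem measurableSet_Iic] with t ht
      exact hptw t ht
    · rw [integral_const_mul, exp_val_aux hα s]
      refine le_of_eq ?_
      rw [hCstdef]
      field_simp
  · have h₂ : ¬ IntegrableOn f₂ (Set.Iic s) := fun h =>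
      h₁ ((h.sub hdiffint).congr (Filter.Eventually.of_forall fun t => by
        show f₂ t - (f₂ t - f₁ t) = f₁ t; abel))
    rw [integral_undef h₁, integral_undef h₂, sub_zero, norm_zero]
    have : 0 ≤ M / α := div_nonneg hM0 hα.le
    have h1L : (0:ℝ) ≤ 1 + LH1s := by linarith
    exact mul_nonneg (mul_nonneg (mul_nonneg this hLFs0) h1L) hD0
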